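/- Let F ⪯ G ⪯ A be faces, and fix an incidence function for ℧•_F whose restriction to the faces containing G gives an incidence function for ℧•_G. Then ℧•_G, placed in cohomological degrees d_{G/F}, …, d_{A/F} (i.e., shifted so that the summand S_A[∂^{−F′}] sits in degree d_{F′} − d_F), is a subcomplex of ℧•_F, and the induced map on top cohomology H^{d_{A/G}}(℧•_G) → H^{d_{A/F}}(℧•_F) is a degree-preserving surjection of ℤ^d-graded modules. Consequently qdeg H^{d_{A/F}}(℧•_F) ⊆ qdeg H^{d_{A/G}}(℧•_G). -/

import Mathlib

/-!
Common setup: `A` is a `d × n` integer matrix, given by its columns `a : Fin n → Lat d`,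
with `ℤA = ℤ^d` (`SpansZ`) and `ℕA` pointed (`Pointed`).  Faces, semigroups, graded
modules, quasidegree sets, the dualizing complex `ω•_{S_A}` and the Ishida complexes
`℧•_F` are formalized below; all cohomology statements are expressed via the
(ℤ^d-)graded components of these complexes.
-/

namespace GKZ

open scoped Classical

noncomputable section

abbrev Lat (d : ℕ) := Fin d → ℤ
abbrev CS (d : ℕ) := Fin d → ℂ
abbrev Laur (d : ℕ) := AddMonoidAlgebra ℂ (Lat d)

/-- Inclusion ℤ^d ⊆ ℂ^d. -/
def toC {d : ℕ} (α : Lat d) : CS d := fun i => (α i : ℂ)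
/-- Inclusion ℤ^d ⊆ ℝ^d. -/
def toR {d : ℕ} (α : Lat d) : Fin d → ℝ := fun i => (α i : ℝ)
/-- The monomial t^α in the Laurent polynomial ring ℂ[ℤ^d]. -/
def mono {d : ℕ} (α : Lat d) : Laur d := AddMonoidAlgebra.single α 1

variable {d n : ℕ}

/-- The affine semigroup ℕA generated by the columns of `A`. -/
def NA (a : Fin n → Lat d) : AddSubmonoid (Lat d) := AddSubmonoid.closure (Set.range a)

/-- ℕA is pointed: ℕA ∩ (−ℕA) = {0}. -/
def Pointed (a : Fin n → Lat d) : Prop := ∀ x ∈ NA a, -x ∈ NA a → x = 0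

/-- ℤA = ℤ^d. -/
def SpansZ (a : Fin n → Lat d) : Prop :=
  AddSubgroup.closure (Set.range a) = (⊤ : AddSubgroup (Lat d))

/-- The real cone ℝ₊F spanned by the columns indexed by `F`. -/
def cone (a : Fin n → Lat d) (F : Set (Fin n)) : Set (Fin d → ℝ) :=
  { x | ∃ c : Fin n → ℝ, (∀ i, 0 ≤ c i) ∧ (∀ i, i ∉ F → c i = 0) ∧ x = ∑ i, c i • toR (a i) }

/-- `F` is a face of `A`: ℝ₊F is a face of the cone ℝ₊A, and `F` consists of all the
columns of `A` lying on that face. -/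
def IsFace (a : Fin n → Lat d) (F : Set (Fin n)) : Prop :=
  (∀ x y, x ∈ cone a Set.univ → y ∈ cone a Set.univ →
      x + y ∈ cone a F → x ∈ cone a F ∧ y ∈ cone a F) ∧
  (∀ i, toR (a i) ∈ cone a F → i ∈ F)

/-- ℕF. -/
def NFace (a : Fin n → Lat d) (F : Set (Fin n)) : AddSubmonoid (Lat d) :=
  AddSubmonoid.closure (a '' F)

/-- ℤF. -/
def ZFace (a : Fin n → Lat d) (F : Set (Fin n)) : AddSubgroup (Lat d) :=
  AddSubgroup.closure (a '' F)

/-- ℂF ⊆ ℂ^d. -/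
def CFace (a : Fin n → Lat d) (F : Set (Fin n)) : Submodule ℂ (CS d) :=
  Submodule.span ℂ (toC '' (a '' F))

/-- d_F, the rank of ℤF. -/
def dimF (a : Fin n → Lat d) (F : Set (Fin n)) : ℕ :=
  Module.finrank ℤ (Submodule.span ℤ (a '' F))

/-- σ_F, the sum of the columns of F. -/
def sigmaF (a : Fin n → Lat d) (F : Set (Fin n)) : Lat d :=
  ∑ i : Fin n, if i ∈ F then a i else 0

/-- ε_A = a_1 + ⋯ + a_n. -/
def epsA (a : Fin n → Lat d) : Lat d := ∑ i : Fin n, a i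

/-- ℕA − ℕF ⊆ ℤ^d. -/
def NAmNF (a : Fin n → Lat d) (F : Set (Fin n)) : Set (Lat d) :=
  {γ | ∃ u ∈ NA a, ∃ v ∈ NFace a F, γ = u - v}

/-- ℕF − ℕA ⊆ ℤ^d. -/
def NFmNA (a : Fin n → Lat d) (F : Set (Fin n)) : Set (Lat d) :=
  {γ | ∃ u ∈ NFace a F, ∃ v ∈ NA a, γ = u - v}

/-- ℕF − ℕH ⊆ ℤ^d. -/
def NFmNH (a : Fin n → Lat d) (F H : Set (Fin n)) : Set (Lat d) :=
  {γ | ∃ u ∈ NFace a F, ∃ v ∈ NFace a H, γ = u - v}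

/-- ℕA is normal: ℕA = ℤ^d ∩ ℝ₊A. -/
def Normal (a : Fin n → Lat d) : Prop :=
  ∀ γ : Lat d, γ ∈ NA a ↔ toR γ ∈ cone a Set.univ

/-- The Zariski closure of a subset of ℂ^d. -/
def zClosure {d : ℕ} (T : Set (CS d)) : Set (CS d) :=
  {x | ∀ p : MvPolynomial (Fin d) ℂ, (∀ y ∈ T, MvPolynomial.eval y p = 0) →
    MvPolynomial.eval x p = 0}

def IsZClosed {d : ℕ} (Z : Set (CS d)) : Prop := zClosure Z ⊆ Z

/-- Irreducibility of a subset of ℂ^d in the Zariski topology. -/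
def ZIrred {d : ℕ} (Z : Set (CS d)) : Prop :=
  Z.Nonempty ∧ ∀ C₁ C₂ : Set (CS d), IsZClosed C₁ → IsZClosed C₂ →
    Z ⊆ C₁ ∪ C₂ → Z ⊆ C₁ ∨ Z ⊆ C₂

/-- Krull (topological) dimension of a subset of ℂ^d with the Zariski topology:
the Krull dimension of the poset of irreducible Zariski-closed subsets contained in it. -/
def zdim {d : ℕ} (Z : Set (CS d)) : WithBot ℕ∞ :=
  Order.krullDim {C : Set (CS d) // C ⊆ Z ∧ IsZClosed C ∧ ZIrred C}

/-- `Z` is an irreducible component of `W`: a maximal irreducible Zariski-closed subset. -/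
def IsIrredComp {d : ℕ} (Z W : Set (CS d)) : Prop :=
  Z ⊆ W ∧ IsZClosed Z ∧ ZIrred Z ∧
    ∀ Z' : Set (CS d), IsZClosed Z' → ZIrred Z' → Z ⊆ Z' → Z' ⊆ W → Z' = Z

/-- The type of faces of `A`. -/
def FaceT (a : Fin n → Lat d) := {G : Set (Fin n) // IsFace a G}

instance (a : Fin n → Lat d) : Finite (FaceT a) := by
  unfold FaceT; infer_instance

noncomputable instance (a : Fin n → Lat d) : Fintype (FaceT a) := Fintype.ofFinite _

/-- Degree set of the localization M[∂^{−G}] of the monomial module with degree set `E`: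
the set E − ℕG. -/
def locE (a : Fin n → Lat d) (E : Set (Lat d)) (G : Set (Fin n)) : Set (Lat d) :=
  {γ | ∃ f ∈ NFace a G, γ + f ∈ E}

/-- Functions supported on a subset, as a ℂ-submodule of the function space. -/
def funSupported {ι : Type*} (S : Set ι) : Submodule ℂ (ι → ℂ) where
  carrier := {c | ∀ i, i ∉ S → c i = 0}
  add_mem' := by
    intro x y hx hy i hi
    simp only [Set.mem_setOf_eq] at hx hy
    simp [Pi.add_apply, hx i hi, hy i hi]
  zero_mem' := by intro i _; rfl
  smul_mem' := by
    intro r x hx i hi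
    simp only [Set.mem_setOf_eq] at hx
    simp [Pi.smul_apply, hx i hi]

/-- The degree-γ part of the term of the Ishida complex ℧•_F(M) (base face `F`, monomial
module with degree set `E`) whose summands are indexed by the faces of absolute dimension
`j` (cohomological degree `j − d_F`): functions on the faces `G ⊇ F` with `d_G = j` and
`γ ∈ E − ℕG`. -/
def ishChain (a : Fin n → Lat d) (E : Set (Lat d)) (F : Set (Fin n)) (j : ℤ) (γ : Lat d) :
    Submodule ℂ (FaceT a → ℂ) :=
  funSupported {G : FaceT a | F ⊆ G.1 ∧ (dimF a G.1 : ℤ) = j ∧ γ ∈ locE a E G.1}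

/-- The differential of the Ishida complex (in each ℤ^d-degree): the component from a face
`G'` into a face `G''` covering it is `ε G' G''` times the natural localization map. -/
def ishDelta (a : Fin n → Lat d) (ε : Set (Fin n) → Set (Fin n) → ℂ) :
    (FaceT a → ℂ) →ₗ[ℂ] (FaceT a → ℂ) where
  toFun c := fun G'' => ∑ G' : FaceT a,
    if G'.1 ⊆ G''.1 ∧ dimF a G''.1 = dimF a G'.1 + 1 then ε G'.1 G''.1 * c G' else 0
  map_add' x y := by
    funext G''
    simp only [Pi.add_apply, ← Finset.sum_add_distrib]
    refine Finset.sum_congr rfl fun G' _ => ?_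
    by_cases h : G'.1 ⊆ G''.1 ∧ dimF a G''.1 = dimF a G'.1 + 1
    · simp [h, mul_add]
    · simp [h]
  map_smul' r x := by
    funext G''
    simp only [Pi.smul_apply, smul_eq_mul, RingHom.id_apply, Finset.mul_sum]
    refine Finset.sum_congr rfl fun G' _ => ?_
    by_cases h : G'.1 ⊆ G''.1 ∧ dimF a G''.1 = dimF a G'.1 + 1
    · simp only [h, and_self, if_true]; ring
    · simp [h]

/-- Degree-γ cocycles of the Ishida complex at absolute dimension `j`. -/
def ishZ (a : Fin n → Lat d) (E : Set (Lat d)) (ε : Set (Fin n) → Set (Fin n) → ℂ)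
    (F : Set (Fin n)) (j : ℤ) (γ : Lat d) : Submodule ℂ (FaceT a → ℂ) :=
  ishChain a E F j γ ⊓ LinearMap.ker (ishDelta a ε)

/-- Degree-γ coboundaries of the Ishida complex at absolute dimension `j`. -/
def ishB (a : Fin n → Lat d) (E : Set (Lat d)) (ε : Set (Fin n) → Set (Fin n) → ℂ)
    (F : Set (Fin n)) (j : ℤ) (γ : Lat d) : Submodule ℂ (FaceT a → ℂ) :=
  Submodule.map (ishDelta a ε) (ishChain a E F (j - 1) γ)

/-- The degree-γ component of the cohomology of the Ishida complex ℧•_F(M) at absolute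
dimension `j` (cohomological degree `j − d_F`). -/
abbrev ishH (a : Fin n → Lat d) (E : Set (Lat d)) (ε : Set (Fin n) → Set (Fin n) → ℂ)
    (F : Set (Fin n)) (j : ℤ) (γ : Lat d) :=
  ↥(ishZ a E ε F j γ) ⧸
    Submodule.comap (ishZ a E ε F j γ).subtype (ishB a E ε F j γ)

/-- Nonvanishing of the degree-γ component of the cohomology of the Ishida complex. -/
def ishHne (a : Fin n → Lat d) (E : Set (Lat d)) (ε : Set (Fin n) → Set (Fin n) → ℂ)
    (F : Set (Fin n)) (j : ℤ) (γ : Lat d) : Prop :=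
  ¬ (ishZ a E ε F j γ ≤ ishB a E ε F j γ)

/-- Degree-γ part of the term of ω•_{S_A} in cohomological degree `i`:
functions on the faces `G` with `d_{A/G} = i` and `γ ∈ ℕG − ℕA`. -/
def omChain (a : Fin n → Lat d) (i : ℤ) (γ : Lat d) : Submodule ℂ (FaceT a → ℂ) :=
  funSupported {G : FaceT a | (dimF a G.1 : ℤ) = (d : ℤ) - i ∧ γ ∈ NFmNA a G.1}

/-- Degree-γ part of the differential of ω•_{S_A}: the component from a face `G'` to a face
`G''` covered by it is `ε G' G''` times the natural projection ℂ{ℕG'−ℕA} → ℂ{ℕG''−ℕA}. -/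
def omDelta (a : Fin n → Lat d) (ε : Set (Fin n) → Set (Fin n) → ℂ) (γ : Lat d) :
    (FaceT a → ℂ) →ₗ[ℂ] (FaceT a → ℂ) where
  toFun c := fun G'' =>
    if γ ∈ NFmNA a G''.1 then
      ∑ G' : FaceT a,
        if G''.1 ⊆ G'.1 ∧ dimF a G'.1 = dimF a G''.1 + 1 then ε G'.1 G''.1 * c G' else 0
    else 0
  map_add' x y := by
    funext G''
    by_cases hγ : γ ∈ NFmNA a G''.1
    · simp only [Pi.add_apply, hγ, if_true, ← Finset.sum_add_distrib]
      refine Finset.sum_congr rfl fun G' _ => ?_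
      by_cases h : G''.1 ⊆ G'.1 ∧ dimF a G'.1 = dimF a G''.1 + 1
      · simp [h, mul_add]
      · simp [h]
    · simp [hγ]
  map_smul' r x := by
    funext G''
    by_cases hγ : γ ∈ NFmNA a G''.1
    · simp only [Pi.smul_apply, smul_eq_mul, RingHom.id_apply, hγ, if_true, Finset.mul_sum]
      refine Finset.sum_congr rfl fun G' _ => ?_
      by_cases h : G''.1 ⊆ G'.1 ∧ dimF a G'.1 = dimF a G''.1 + 1
      · simp only [h, and_self, if_true]; ring
      · simp [h]
    · simp [hγ]

/-- Degree-γ cocycles of ω•_{S_A} in cohomological degree `i`. -/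
def omZ (a : Fin n → Lat d) (ε : Set (Fin n) → Set (Fin n) → ℂ) (i : ℤ) (γ : Lat d) :
    Submodule ℂ (FaceT a → ℂ) :=
  omChain a i γ ⊓ LinearMap.ker (omDelta a ε γ)

/-- Degree-γ coboundaries of ω•_{S_A} in cohomological degree `i`. -/
def omB (a : Fin n → Lat d) (ε : Set (Fin n) → Set (Fin n) → ℂ) (i : ℤ) (γ : Lat d) :
    Submodule ℂ (FaceT a → ℂ) :=
  Submodule.map (omDelta a ε γ) (omChain a (i - 1) γ)

/-- Nonvanishing of H^i(ω•_{S_A})_γ. -/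
def omHne (a : Fin n → Lat d) (ε : Set (Fin n) → Set (Fin n) → ℂ) (i : ℤ) (γ : Lat d) : Prop :=
  ¬ (omZ a ε i γ ≤ omB a ε i γ)

/-- A ℤ^d-graded S_A-module, presented by its grading together with the (degree-shifting)
action of the monomials t^u, u ∈ ℕA. -/
structure GradedSAMod (a : Fin n → Lat d) (M : Type) [AddCommGroup M] [Module ℂ M] where
  decomp : Lat d → Submodule ℂ M
  internal : DirectSum.IsInternal decomp
  act : (u : Lat d) → u ∈ NA a → (M →ₗ[ℂ] M)
  act_zero : ∀ h0 : (0 : Lat d) ∈ NA a, act 0 h0 = LinearMap.id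
  act_add : ∀ (u : Lat d) (hu : u ∈ NA a) (v : Lat d) (hv : v ∈ NA a) (huv : u + v ∈ NA a),
    act (u + v) huv = (act u hu).comp (act v hv)
  act_grade : ∀ (u : Lat d) (hu : u ∈ NA a) (γ : Lat d), ∀ m ∈ decomp γ,
    act u hu m ∈ decomp (γ + u)

/-- Finite generation over S_A. -/
def GradedSAMod.FGmod {a : Fin n → Lat d} {M : Type} [AddCommGroup M] [Module ℂ M]
    (g : GradedSAMod a M) : Prop :=
  ∃ S : Finset M, ∀ m : M,
    m ∈ Submodule.span ℂ {x | ∃ u, ∃ hu : u ∈ NA a, ∃ s ∈ S, x = g.act u hu s}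

/-- Degrees of nonzero homogeneous elements of `M` that survive in the localization
`M[∂^{−H}]` (i.e. are killed by no power of t^{σ_H}). -/
def GradedSAMod.survTdeg {a : Fin n → Lat d} {M : Type} [AddCommGroup M] [Module ℂ M]
    (g : GradedSAMod a M) (H : Set (Fin n)) : Set (Lat d) :=
  {γ | ∃ m ∈ g.decomp γ, m ≠ 0 ∧ ∀ (k : ℕ) (hk : k • sigmaF a H ∈ NA a), g.act _ hk m ≠ 0}

/-- The quasidegree set of the localization `M[∂^{−H}]` of a finitely generated graded
module `M`: the union over `k` of the Zariski closures of the true degree sets of the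
finitely generated graded submodules t^{−kσ_H}·M of the localization. -/
def GradedSAMod.qdegLoc {a : Fin n → Lat d} {M : Type} [AddCommGroup M] [Module ℂ M]
    (g : GradedSAMod a M) (H : Set (Fin n)) : Set (CS d) :=
  ⋃ k : ℕ, zClosure (toC '' {γ : Lat d | γ + k • sigmaF a H ∈ g.survTdeg H})

/-- A ℂ-submodule is graded: it is spanned by its homogeneous elements. -/
def IsGradedSubC {d : ℕ} {M : Type} [AddCommGroup M] [Module ℂ M]
    (decomp : Lat d → Submodule ℂ M) (N : Submodule ℂ M) : Prop :=
  N = Submodule.span ℂ ((N : Set M) ∩ ⋃ γ : Lat d, (decomp γ : Set M))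

/-- A ℂ-submodule is an S_A-submodule: stable under the monomial action. -/
def IsStableSub {a : Fin n → Lat d} {M : Type} [AddCommGroup M] [Module ℂ M]
    (g : GradedSAMod a M) (N : Submodule ℂ M) : Prop :=
  ∀ (u : Lat d) (hu : u ∈ NA a), ∀ m ∈ N, g.act u hu m ∈ N

/-- The semigroup ring S_A = ℂ[ℕA] as a subalgebra of ℂ[ℤ^d]. -/
def SAlg (a : Fin n → Lat d) : Subalgebra ℂ (Laur d) :=
  Algebra.adjoin ℂ {x | ∃ α ∈ NA a, x = mono α}

/-- The monomial t^u, u ∈ ℕA, as an element of S_A. -/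
def smono (a : Fin n → Lat d) (u : Lat d) (hu : u ∈ NA a) : ↥(SAlg a) :=
  ⟨mono u, Algebra.subset_adjoin ⟨u, hu, rfl⟩⟩

/-- The underlying ℂ-vector space of the monomial module ℂ{E}: finitely supported
functions on `E`. -/
abbrev wMod (d : ℕ) (E : Set (Lat d)) := ↥(Finsupp.supported ℂ ℂ E)

/-- The action of the monomial t^w on ℂ{E}: shift the degree by `w`, truncate back to `E`. -/
def wAct {d : ℕ} (E : Set (Lat d)) (w : Lat d) : wMod d E →ₗ[ℂ] wMod d E :=
  (Finsupp.restrictDom ℂ ℂ E).comp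
    ((Finsupp.lmapDomain ℂ ℂ (fun γ => γ + w)).comp (Finsupp.supported ℂ ℂ E).subtype)

/-- The elements annihilated by some power of the ideal generated by the t^{a_i}, i ∉ F. -/
def torsionAt (a : Fin n → Lat d) (F : Set (Fin n)) {ML : Type} [AddCommGroup ML]
    [Module ℂ ML] (TL : (u : Lat d) → u ∈ NA a → (ML →ₗ[ℂ] ML)) : Set ML :=
  {y | ∃ k : ℕ, ∀ f : Fin k → Fin n, (∀ j, f j ∉ F) →
    ∀ h : (∑ j, a (f j)) ∈ NA a, TL (∑ j, a (f j)) h y = 0}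

/-- The toric ideal I_A ⊆ R_A = ℂ[∂_1,…,∂_n]. -/
def toricIdeal (a : Fin n → Lat d) : Ideal (MvPolynomial (Fin n) ℂ) :=
  RingHom.ker (MvPolynomial.aeval (fun i => mono (a i)) : MvPolynomial (Fin n) ℂ →ₐ[ℂ] Laur d)

/-- The ideal I_F^A = I_A + ⟨∂_i : a_i ∉ F⟩ of R_A. -/
def IFA (a : Fin n → Lat d) (F : Set (Fin n)) : Ideal (MvPolynomial (Fin n) ℂ) :=
  toricIdeal a ⊔ Ideal.span {p | ∃ i, i ∉ F ∧ p = MvPolynomial.X i}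

/-- An R_A-submodule is graded: it is spanned by its homogeneous elements. -/
def IsGradedSubR {d n : ℕ} {M : Type} [AddCommGroup M] [Module ℂ M]
    [Module (MvPolynomial (Fin n) ℂ) M]
    (decomp : Lat d → Submodule ℂ M) (N : Submodule (MvPolynomial (Fin n) ℂ) M) : Prop :=
  N = Submodule.span (MvPolynomial (Fin n) ℂ) ((N : Set M) ∩ ⋃ γ : Lat d, (decomp γ : Set M))

/-- `h` is the primitive integral support function of the facet `G`. -/
def IsPISF (a : Fin n → Lat d) (G : Set (Fin n)) (h : Lat d →ₗ[ℤ] ℤ) : Prop :=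
  (∃ x, h x = 1) ∧ (∀ i, 0 ≤ h (a i)) ∧ (∀ i, h (a i) = 0 ↔ i ∈ G)

/-- The ℂ-linear extension of an integral linear form to ℂ^d. -/
def hC {d : ℕ} (h : Lat d →ₗ[ℤ] ℤ) (β : CS d) : ℂ :=
  ∑ j : Fin d, β j * ((h (Pi.single j 1) : ℤ) : ℂ)


/-! ### Auxiliary lemmas -/

lemma toR_add' {d : ℕ} (x y : Lat d) : toR (x + y) = toR x + toR y := by
  funext i; simp [toR]

lemma toR_mem_spanR {d : ℕ} {S : Set (Lat d)} {x : Lat d}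
    (hx : x ∈ Submodule.span ℤ S) :
    toR x ∈ Submodule.span ℝ (toR '' S) := by
  induction hx using Submodule.span_induction with
  | mem y hy => exact Submodule.subset_span ⟨y, hy, rfl⟩
  | zero =>
      have h0 : toR (0 : Lat d) = 0 := by funext i; simp [toR]
      rw [h0]; exact (Submodule.span ℝ (toR '' S)).zero_mem
  | add y z _ _ hy hz => rw [toR_add']; exact Submodule.add_mem _ hy hz
  | smul k y _ hy =>
      have hs : toR (k • y) = (k : ℝ) • toR y := by
        funext i; simp [toR]
      rw [hs]; exact Submodule.smul_mem _ _ hy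

lemma spanR_top_of_dim_eq {d n : ℕ} (hd : 0 < d) (a : Fin n → Lat d) (H : Set (Fin n))
    (hdim : dimF a H = d) :
    Submodule.span ℝ (toR '' (a '' H)) = ⊤ := by
  set N := Submodule.span ℤ (a '' H) with hN
  haveI : Module.Finite ℤ ↥N := Module.Finite.iff_fg.mpr (IsNoetherian.noetherian N)
  have hrank : Module.finrank ℤ ↥N = d := hdim
  let b : Module.Basis (Fin d) ℤ ↥N := (Module.finBasis ℤ ↥N).reindex (finCongr hrank)
  let w : Fin d → Lat d := fun i => ((b i : ↥N) : Lat d)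
  have hw : LinearIndependent ℤ w :=
    b.linearIndependent.map' N.subtype N.ker_subtype
  let M : Matrix (Fin d) (Fin d) ℤ := Matrix.of (fun i j => w i j)
  have hdet : M.det ≠ 0 := by
    intro h0
    obtain ⟨v, hv, hvM⟩ := Matrix.exists_vecMul_eq_zero_iff.mpr h0
    apply hv
    funext i
    refine Fintype.linearIndependent_iff.mp hw v ?_ i
    funext j
    have := congrFun hvM j
    simpa [Matrix.vecMul, dotProduct, M] using this
  have hdetR : (M.map (Int.cast : ℤ → ℝ)).det ≠ 0 := by
    rw [show (Int.cast : ℤ → ℝ) = ⇑(Int.castRingHom ℝ) from rfl, ← RingHom.mapMatrix_apply,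
      ← RingHom.map_det]
    exact fun h => hdet (by simpa using h)
  have hwR : LinearIndependent ℝ (fun i => toR (w i)) := by
    rw [Fintype.linearIndependent_iff]
    intro g hg i
    by_contra hgi
    apply hdetR
    apply Matrix.exists_vecMul_eq_zero_iff.mp
    refine ⟨g, fun h => hgi (by rw [h]; rfl), ?_⟩
    funext j
    have := congrFun hg j
    simpa [Matrix.vecMul, dotProduct, M, toR, Finset.sum_apply] using this
  have hspan : Submodule.span ℝ (Set.range (fun i => toR (w i))) = ⊤ := by
    apply hwR.span_eq_top_of_card_eq_finrank'
    simp [Module.finrank_fin_fun]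
  rw [eq_top_iff, ← hspan]
  apply Submodule.span_le.mpr
  rintro _ ⟨i, rfl⟩
  exact toR_mem_spanR (b i).2

lemma cone_subset_univ {d n : ℕ} (a : Fin n → Lat d) (H : Set (Fin n)) :
    cone a H ⊆ cone a Set.univ := by
  rintro x ⟨c, h1, _, h3⟩
  exact ⟨c, h1, fun i hi => absurd (Set.mem_univ i) hi, h3⟩

lemma gen_mem_cone_univ {d n : ℕ} (a : Fin n → Lat d) (i : Fin n) :
    toR (a i) ∈ cone a Set.univ := by
  refine ⟨fun j => if j = i then 1 else 0, ?_, ?_, ?_⟩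
  · intro j; dsimp only; split <;> norm_num
  · intro j hj; exact absurd (Set.mem_univ j) hj
  · simp [ite_smul]

lemma mem_face_of_dim_eq {d n : ℕ} (hd : 0 < d) (a : Fin n → Lat d) {H : Set (Fin n)}
    (hH : IsFace a H) (hdim : dimF a H = d) (i : Fin n) : i ∈ H := by
  apply hH.2
  have hx : toR (a i) ∈ cone a Set.univ := gen_mem_cone_univ a i
  have hmem : toR (a i) ∈ Submodule.span ℝ (toR '' (a '' H)) := by
    rw [spanR_top_of_dim_eq hd a H hdim]; trivial
  obtain ⟨m, f, g, hfg⟩ := Submodule.mem_span_set'.mp hmem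
  have hgk : ∀ k : Fin m, ∃ j : Fin n, j ∈ H ∧ toR (a j) = (g k : Fin d → ℝ) := by
    intro k
    obtain ⟨y, ⟨j, hj, rfl⟩, hy⟩ := (g k).2
    exact ⟨j, hj, hy⟩
  choose idx hidxH hidxval using hgk
  set r : Fin n → ℝ := fun j => ∑ k : Fin m, if idx k = j then f k else 0 with hr
  have hr0 : ∀ j, j ∉ H → r j = 0 := by
    intro j hj
    apply Finset.sum_eq_zero
    intro k _
    rw [if_neg]
    intro hkj
    exact hj (hkj ▸ hidxH k)
  have hrsum : ∑ j, r j • toR (a j) = toR (a i) := by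
    rw [← hfg]
    rw [show (∑ j, r j • toR (a j)) = ∑ j, ∑ k : Fin m, (if idx k = j then f k else 0) • toR (a j) by
      refine Finset.sum_congr rfl fun j _ => ?_
      rw [hr, Finset.sum_smul]]
    rw [Finset.sum_comm]
    refine Finset.sum_congr rfl fun k _ => ?_
    rw [← hidxval k]
    simp [ite_smul]
  set lam : ℝ := ∑ k : Fin m, |f k| with hlam
  have hlam0 : 0 ≤ lam := Finset.sum_nonneg fun k _ => abs_nonneg _
  have hrle : ∀ j, r j ≤ lam := by
    intro j
    refine Finset.sum_le_sum fun k _ => ?_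
    split
    · exact le_abs_self _
    · exact abs_nonneg _
  set cy : Fin n → ℝ := fun j => (if j ∈ H then lam else 0) - r j with hcy
  set y : Fin d → ℝ := ∑ j, cy j • toR (a j) with hy
  have hyH : y ∈ cone a H := by
    refine ⟨cy, ?_, ?_, rfl⟩
    · intro j
      by_cases hj : j ∈ H
      · simp only [hcy, hj, if_pos]
        linarith [hrle j]
      · simp [hcy, hj, hr0 j hj]
    · intro j hj
      simp [hcy, hj, hr0 j hj]
  have hxy : toR (a i) + y ∈ cone a H := by
    refine ⟨fun j => if j ∈ H then lam else 0, ?_, ?_, ?_⟩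
    · intro j; dsimp only; split
      · exact hlam0
      · exact le_refl 0
    · intro j hj; simp [hj]
    · rw [hy, ← hrsum, ← Finset.sum_add_distrib]
      refine Finset.sum_congr rfl fun j _ => ?_
      rw [hcy]
      module
  exact (hH.1 (toR (a i)) y hx (cone_subset_univ a H hyH) hxy).1

lemma NFace_mono {d n : ℕ} (a : Fin n → Lat d) {F G : Set (Fin n)} (h : F ⊆ G) :
    NFace a F ≤ NFace a G :=
  AddSubmonoid.closure_mono (Set.image_mono h)

lemma locE_mono {d n : ℕ} (a : Fin n → Lat d) (E : Set (Lat d)) {F G : Set (Fin n)}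
    (h : F ⊆ G) : locE a E F ⊆ locE a E G := by
  rintro γ ⟨u, hu, huE⟩
  exact ⟨u, NFace_mono a h hu, huE⟩

lemma mem_ishChain_iff {d n : ℕ} (a : Fin n → Lat d) (E : Set (Lat d)) (F : Set (Fin n))
    (j : ℤ) (γ : Lat d) (c : FaceT a → ℂ) :
    c ∈ ishChain a E F j γ ↔ ∀ G : FaceT a,
      ¬(F ⊆ G.1 ∧ (dimF a G.1 : ℤ) = j ∧ γ ∈ locE a E G.1) → c G = 0 :=
  Iff.rfl

lemma ishChain_antimono {d n : ℕ} (a : Fin n → Lat d) (E : Set (Lat d))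
    {F G : Set (Fin n)} (hFG : F ⊆ G) (j : ℤ) (γ : Lat d) :
    ishChain a E G j γ ≤ ishChain a E F j γ := by
  intro c hc
  rw [mem_ishChain_iff] at hc ⊢
  intro G'' hG''
  apply hc
  intro hmem
  exact hG'' ⟨hFG.trans hmem.1, hmem.2⟩

lemma ishDelta_mem_chain {d n : ℕ} (a : Fin n → Lat d) (E : Set (Lat d))
    (ε : Set (Fin n) → Set (Fin n) → ℂ) (G : Set (Fin n)) (j : ℤ) (γ : Lat d)
    (c : FaceT a → ℂ) (hc : c ∈ ishChain a E G j γ) :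
    ishDelta a ε c ∈ ishChain a E G (j + 1) γ := by
  rw [mem_ishChain_iff] at hc ⊢
  intro G'' hG''
  show (∑ G' : FaceT a,
      if G'.1 ⊆ G''.1 ∧ dimF a G''.1 = dimF a G'.1 + 1 then ε G'.1 G''.1 * c G' else 0) = 0
  apply Finset.sum_eq_zero
  intro G' _
  split_ifs with h
  · rcases h with ⟨hsub, hdim⟩
    by_cases hc' : c G' = 0
    · rw [hc', mul_zero]
    · exfalso
      have hG' : G ⊆ G'.1 ∧ (dimF a G'.1 : ℤ) = j ∧ γ ∈ locE a E G'.1 := by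
        by_contra hn; exact hc' (hc G' hn)
      apply hG''
      refine ⟨hG'.1.trans hsub, ?_, locE_mono a E hsub hG'.2.2⟩
      have h1 := hG'.2.1
      omega
  · rfl

lemma ishChain_top_eq {d n : ℕ} (hd : 0 < d) (a : Fin n → Lat d) (E : Set (Lat d))
    {F G : Set (Fin n)} (γ : Lat d) :
    ishChain a E F (d : ℤ) γ = ishChain a E G (d : ℤ) γ := by
  unfold ishChain
  congr 1
  ext G''
  have key : (dimF a G''.1 : ℤ) = (d : ℤ) → ∀ i, i ∈ G''.1 := by
    intro hdim i
    exact mem_face_of_dim_eq hd a G''.2 (by exact_mod_cast hdim) i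
  constructor
  · rintro ⟨-, h2, h3⟩
    exact ⟨fun i _ => key h2 i, h2, h3⟩
  · rintro ⟨-, h2, h3⟩
    exact ⟨fun i _ => key h2 i, h2, h3⟩

/-- For faces `F ⪯ G ⪯ A` (with an incidence function for ℧•_F restricting
to one for ℧•_G), ℧•_G (placed in the cohomological degrees given by absolute face
dimension) is a subcomplex of ℧•_F, and the induced map on top cohomology
H^{d_{A/G}}(℧•_G) → H^{d_{A/F}}(℧•_F) is a degree-preserving surjection; consequently
qdeg H^{d_{A/F}}(℧•_F) ⊆ qdeg H^{d_{A/G}}(℧•_G).  (Degreewise: cochain inclusions,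
stability of the G-chains under the differential, and surjectivity on each graded
component of the top cohomology.) -/
theorem ishida_subcomplex_top_surjection
    {d n : ℕ} (hd : 0 < d) (hn : 0 < n) (a : Fin n → Lat d)
    (hZA : SpansZ a) (hPt : Pointed a)
    (F G : Set (Fin n)) (hF : IsFace a F) (hG : IsFace a G) (hFG : F ⊆ G)
    (ε : Set (Fin n) → Set (Fin n) → ℂ)
    (hval : ∀ G' G'' : FaceT a, G'.1 ⊆ G''.1 → dimF a G''.1 = dimF a G'.1 + 1 →
      ε G'.1 G''.1 = 1 ∨ ε G'.1 G''.1 = -1)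
    (hsqF : ∀ (γ : Lat d) (j : ℤ) (c : FaceT a → ℂ),
      c ∈ ishChain a (NA a : Set (Lat d)) F j γ → ishDelta a ε (ishDelta a ε c) = 0)
    (hsqG : ∀ (γ : Lat d) (j : ℤ) (c : FaceT a → ℂ),
      c ∈ ishChain a (NA a : Set (Lat d)) G j γ → ishDelta a ε (ishDelta a ε c) = 0) :
    (∀ (j : ℤ) (γ : Lat d),
      ishChain a (NA a : Set (Lat d)) G j γ ≤ ishChain a (NA a : Set (Lat d)) F j γ) ∧
    (∀ (j : ℤ) (γ : Lat d) (c : FaceT a → ℂ), c ∈ ishChain a (NA a : Set (Lat d)) G j γ →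
      ishDelta a ε c ∈ ishChain a (NA a : Set (Lat d)) G (j + 1) γ) ∧
    (∀ γ : Lat d, ishZ a (NA a : Set (Lat d)) ε F (d : ℤ) γ ≤
      ishZ a (NA a : Set (Lat d)) ε G (d : ℤ) γ ⊔ ishB a (NA a : Set (Lat d)) ε F (d : ℤ) γ) ∧
    zClosure (toC '' {γ : Lat d | ishHne a (NA a : Set (Lat d)) ε F (d : ℤ) γ})
      ⊆ zClosure (toC '' {γ : Lat d | ishHne a (NA a : Set (Lat d)) ε G (d : ℤ) γ}) := by
  refine ⟨fun j γ => ishChain_antimono a _ hFG j γ,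
    fun j γ c hc => ishDelta_mem_chain a _ ε G j γ c hc, ?_, ?_⟩
  · intro γ
    refine le_trans ?_ le_sup_left
    unfold ishZ
    rw [ishChain_top_eq hd a _ γ (F := F) (G := G)]
  · have hne : ∀ γ : Lat d, ishHne a (NA a : Set (Lat d)) ε F (d : ℤ) γ →
        ishHne a (NA a : Set (Lat d)) ε G (d : ℤ) γ := by
      intro γ hFne hle
      apply hFne
      calc ishZ a (NA a : Set (Lat d)) ε F (d : ℤ) γ
          = ishZ a (NA a : Set (Lat d)) ε G (d : ℤ) γ := by
            unfold ishZ
            rw [ishChain_top_eq hd a _ γ (F := F) (G := G)]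
        _ ≤ ishB a (NA a : Set (Lat d)) ε G (d : ℤ) γ := hle
        _ ≤ ishB a (NA a : Set (Lat d)) ε F (d : ℤ) γ :=
            Submodule.map_mono (ishChain_antimono a _ hFG ((d : ℤ) - 1) γ)
    intro x hx p hp
    apply hx p
    rintro _ ⟨γ, hγ, rfl⟩
    exact hp _ ⟨γ, hne γ hγ, rfl⟩


end

end GKZ
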